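/- Let A be a p×p real symmetric positive semidefinite matrix of rank d, let α ⊆ {1,…,p} be a set of indices with |α| = d such that the principal submatrix A[α] is nonsingular, and let β = {1,…,p} \ α and k = p − d. If B is a p×p real symmetric positive semidefinite matrix of rank k such that AB = 0, then the principal submatrix B[β] is nonsingular. -/

import Mathlib

open Matrix Module

variable {p : ℕ}

/-- extension of a vector on a finset by zero -/
private noncomputable def extFun (s : Finset (Fin p)) (x : s → ℝ) : Fin p → ℝ :=
  fun i => if h : i ∈ s then x ⟨i, h⟩ else 0

private lemma sum_mul_extFun (s : Finset (Fin p)) (x : s → ℝ) (f : Fin p → ℝ) :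
    ∑ j, f j * extFun s x j = ∑ a : s, f a * x a := by
  classical
  rw [← Finset.sum_subset (Finset.subset_univ s) (by
    intro j _ hj
    simp [extFun, hj])]
  rw [← Finset.sum_attach s (fun j => f j * extFun s x j), Finset.univ_eq_attach]
  refine Finset.sum_congr rfl fun a _ => ?_
  simp [extFun, a.2]

private lemma extFun_mul_sum (s : Finset (Fin p)) (x : s → ℝ) (f : Fin p → ℝ) :
    ∑ j, extFun s x j * f j = ∑ a : s, x a * f a :=
  calc ∑ j, extFun s x j * f j = ∑ j, f j * extFun s x j := by
        exact Finset.sum_congr rfl fun j _ => mul_comm _ _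
    _ = ∑ a : s, f a * x a := sum_mul_extFun s x f
    _ = ∑ a : s, x a * f a := Finset.sum_congr rfl fun a _ => mul_comm _ _

private lemma mulVec_extFun (M : Matrix (Fin p) (Fin p) ℝ) (s : Finset (Fin p)) (x : s → ℝ) :
    M *ᵥ extFun s x = M.submatrix id ((↑) : s → Fin p) *ᵥ x := by
  funext i
  simpa [Matrix.mulVec, dotProduct] using sum_mul_extFun s x (M i)

/-- Let `A` be a `p × p` real symmetric positive semidefinite matrix of
rank `d`, let `α` be a set of `d` indices with `A[α]` nonsingular, and let `β = αᶜ`. If `B`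
is a `p × p` real symmetric positive semidefinite matrix of rank `k = p − d` with `A * B = 0`,
then `B[β]` is nonsingular. -/
theorem det_compl_submatrix_ne_zero {p d : ℕ} (A B : Matrix (Fin p) (Fin p) ℝ)
    (hA : A.PosSemidef) (hrA : A.rank = d)
    (α : Finset (Fin p)) (hα : α.card = d)
    (hdet : (A.submatrix (fun i : α => (i : Fin p)) (fun i : α => (i : Fin p))).det ≠ 0)
    (hB : B.PosSemidef) (hrB : B.rank = p - d) (hAB : A * B = 0) :
    (B.submatrix (fun i : (αᶜ : Finset (Fin p)) => (i : Fin p))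
      (fun i : (αᶜ : Finset (Fin p)) => (i : Fin p))).det ≠ 0 := by
  classical
  intro h0
  obtain ⟨v, hv, hv0⟩ := (Matrix.exists_mulVec_eq_zero_iff).mpr h0
  set u : Fin p → ℝ := extFun αᶜ v with hu
  -- u^T B u = 0
  have hBuβ : ∀ a : (αᶜ : Finset (Fin p)), (B *ᵥ u) (a : Fin p) = 0 := by
    intro a
    have : (B *ᵥ u) (a : Fin p) = ∑ b : (αᶜ : Finset (Fin p)), B a b * v b := by
      simpa [Matrix.mulVec, dotProduct] using sum_mul_extFun αᶜ v (B a)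
    rw [this]
    have := congrFun hv0 a
    simpa [Matrix.mulVec, dotProduct] using this
  have hdot : star u ⬝ᵥ (B *ᵥ u) = 0 := by
    have hsu : star u = u := by funext i; simp
    rw [hsu]
    have : u ⬝ᵥ (B *ᵥ u) = ∑ a : (αᶜ : Finset (Fin p)), v a * (B *ᵥ u) a :=
      extFun_mul_sum αᶜ v (B *ᵥ u)
    rw [this]
    exact Finset.sum_eq_zero fun a _ => by rw [hBuβ a, mul_zero]
  have hBu : B *ᵥ u = 0 := (hB.dotProduct_mulVec_zero_iff u).mp hdot
  -- B * A = 0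
  have hBA : B * A = 0 := by
    rw [← hB.1, ← hA.1, ← Matrix.conjTranspose_mul, hAB, Matrix.conjTranspose_zero]
  have hdp : d ≤ p := by
    have := A.rank_le_card_width
    simp only [Fintype.card_fin] at this
    omega
  -- range A = ker B
  have hle : LinearMap.range A.mulVecLin ≤ LinearMap.ker B.mulVecLin := by
    rintro x ⟨w, rfl⟩
    simp [Matrix.mulVecLin_apply, Matrix.mulVec_mulVec, hBA]
  have hkerB : finrank ℝ (LinearMap.ker B.mulVecLin) = d := by
    have h1 := LinearMap.finrank_range_add_finrank_ker B.mulVecLin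
    have h2 : finrank ℝ (LinearMap.range B.mulVecLin) = p - d := hrB
    have h3 : finrank ℝ (Fin p → ℝ) = p := by simp
    omega
  have hrange : LinearMap.range A.mulVecLin = LinearMap.ker B.mulVecLin :=
    Submodule.eq_of_le_of_finrank_eq hle (by rw [hkerB]; exact hrA)
  have humem : u ∈ LinearMap.range A.mulVecLin := by
    rw [hrange]; exact hBu
  obtain ⟨w, hw⟩ := humem
  -- decompose A = Cᴴ * C
  obtain ⟨C, hC⟩ : ∃ C : Matrix (Fin p) (Fin p) ℝ, A = Cᴴ * C := by
    open scoped MatrixOrder in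
    obtain ⟨X, hX, -, hXX⟩ :=
      CFC.exists_sqrt_of_isSelfAdjoint_of_quasispectrumRestricts hA.isHermitian
        (QuasispectrumRestricts.nnreal_of_nonneg hA.nonneg)
    refine ⟨X, ?_⟩
    rw [← hXX, show Xᴴ = X from hX]
  set y : Fin p → ℝ := C *ᵥ w with hy
  have huy : u = Cᴴ *ᵥ y := by
    rw [← hw, Matrix.mulVecLin_apply, hC, ← Matrix.mulVec_mulVec]
  -- columns of C indexed by α
  set Cα : Matrix (Fin p) α ℝ := C.submatrix id ((↑) : α → Fin p) with hCα
  have hAα : A.submatrix (fun i : α => (i : Fin p)) (fun i : α => (i : Fin p)) = Cαᴴ * Cα := by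
    ext a b
    simp [hC, Matrix.mul_apply, hCα]
  have hcard : Fintype.card α = d := by rw [Fintype.card_coe]; exact hα
  have hrCα : Cα.rank = d := by
    have h1 : (Cαᴴ * Cα).rank = Fintype.card α := by
      rw [← hAα]
      exact Matrix.rank_of_isUnit _ ((Matrix.isUnit_iff_isUnit_det _).mpr
        (isUnit_iff_ne_zero.mpr hdet))
    rw [← Matrix.rank_conjTranspose_mul_self, h1, hcard]
  have hrC : C.rank = d := by
    rw [← Matrix.rank_conjTranspose_mul_self, ← hC, hrA]
  -- range Cα = range C
  have hle' : LinearMap.range Cα.mulVecLin ≤ LinearMap.range C.mulVecLin := by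
    rintro x ⟨z, rfl⟩
    exact ⟨extFun α z, by rw [Matrix.mulVecLin_apply, Matrix.mulVecLin_apply,
      mulVec_extFun C α z]⟩
  have hrangeC : LinearMap.range Cα.mulVecLin = LinearMap.range C.mulVecLin :=
    Submodule.eq_of_le_of_finrank_eq hle' (by
      show Cα.rank = C.rank
      rw [hrCα, hrC])
  have hymem : y ∈ LinearMap.range Cα.mulVecLin := by
    rw [hrangeC]; exact ⟨w, rfl⟩
  obtain ⟨z, hz⟩ := hymem
  -- y ⟂ columns of C indexed by α
  have hcol : ∀ a : α, (Cᴴ *ᵥ y) (a : Fin p) = 0 := by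
    intro a
    have : u (a : Fin p) = 0 := by
      have : (a : Fin p) ∉ (αᶜ : Finset (Fin p)) := by simp [a.2]
      simp [hu, extFun, this]
    rw [← huy]; exact this
  have hvm : y ᵥ* Cα = 0 := by
    funext a
    have := hcol a
    simpa [Matrix.vecMul, Matrix.mulVec, dotProduct, hCα, mul_comm] using this
  have hyy : y ⬝ᵥ y = 0 :=
    calc y ⬝ᵥ y = y ⬝ᵥ (Cα.mulVecLin z) := by rw [hz]
      _ = (y ᵥ* Cα) ⬝ᵥ z := by rw [Matrix.mulVecLin_apply, dotProduct_mulVec]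
      _ = 0 := by rw [hvm, zero_dotProduct]
  have hy0 : y = 0 := dotProduct_self_eq_zero.mp hyy
  have hu0 : u = 0 := by rw [huy, hy0, Matrix.mulVec_zero]
  apply hv
  funext a
  have : u (a : Fin p) = v a := by simp [hu, extFun, a.2]
  rw [← this, hu0]; rfl
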